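/- Combining the surrogate optimization guarantee with Pinsker: if Θ is a parameter set, π_θ and π̂_θ are families of probability mass functions on a finite set, r is a reward with 0 ≤ r ≤ M, and sup_{θ∈Θ} KL(π̂_θ ‖ π_θ) ≤ ε², then the θ* maximizing E_{π̂_θ}[r] satisfies E_{π_{θ*}}[r] ≥ sup_{θ∈Θ} E_{π̂_θ}[r] − √2·M·ε. -/

import Mathlib

/-- `(t+1) log t - 2(t-1)` is nonpositive on `(0,1]` and nonnegative on `[1,∞)`. -/
lemma G_deriv (t : ℝ) (ht : 0 < t) :
    HasDerivAt (fun t : ℝ => (t + 1) * Real.log t - 2 * (t - 1))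
      (Real.log t + (t + 1) * t⁻¹ - 2) t := by
  have h1 : HasDerivAt (fun t : ℝ => (t + 1) * Real.log t)
      (1 * Real.log t + (t + 1) * t⁻¹) t :=
    (((hasDerivAt_id t).add_const 1)).mul (Real.hasDerivAt_log ht.ne')
  have h2 : HasDerivAt (fun t : ℝ => 2 * (t - 1)) 2 t := by
    simpa using ((hasDerivAt_id t).sub_const 1).const_mul 2
  have h3 := h1.sub h2
  rw [one_mul] at h3
  exact h3

lemma G_deriv_nonneg (t : ℝ) (ht : 0 < t) :
    0 ≤ Real.log t + (t + 1) * t⁻¹ - 2 := by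
  have h : Real.log t⁻¹ ≤ t⁻¹ - 1 := Real.log_le_sub_one_of_pos (by positivity)
  rw [Real.log_inv] at h
  have h2 : (t + 1) * t⁻¹ = 1 + t⁻¹ := by field_simp
  nlinarith [h]

lemma G_nonneg {t : ℝ} (ht : 1 ≤ t) : 0 ≤ (t + 1) * Real.log t - 2 * (t - 1) := by
  have hmono : MonotoneOn (fun t : ℝ => (t + 1) * Real.log t - 2 * (t - 1)) (Set.Ici 1) := by
    apply monotoneOn_of_deriv_nonneg (convex_Ici 1)
    · intro x hx
      exact ((G_deriv x (lt_of_lt_of_le one_pos hx)).continuousAt).continuousWithinAt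
    · intro x hx
      rw [interior_Ici] at hx
      exact (G_deriv x (lt_trans one_pos hx)).differentiableAt.differentiableWithinAt
    · intro x hx
      rw [interior_Ici] at hx
      rw [(G_deriv x (lt_trans one_pos hx)).deriv]
      exact G_deriv_nonneg x (lt_trans one_pos hx)
  have := hmono (Set.mem_Ici.mpr le_rfl) (Set.mem_Ici.mpr ht) ht
  simpa using this

lemma G_nonpos {t : ℝ} (ht0 : 0 < t) (ht : t ≤ 1) :
    (t + 1) * Real.log t - 2 * (t - 1) ≤ 0 := by
  have hmono : MonotoneOn (fun t : ℝ => (t + 1) * Real.log t - 2 * (t - 1)) (Set.Ioc 0 1) := by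
    apply monotoneOn_of_deriv_nonneg (convex_Ioc 0 1)
    · intro x hx
      exact ((G_deriv x hx.1).continuousAt).continuousWithinAt
    · intro x hx
      rw [interior_Ioc] at hx
      exact (G_deriv x hx.1).differentiableAt.differentiableWithinAt
    · intro x hx
      rw [interior_Ioc] at hx
      rw [(G_deriv x hx.1).deriv]
      exact G_deriv_nonneg x hx.1
  have := hmono (Set.mem_Ioc.mpr ⟨ht0, ht⟩) (Set.mem_Ioc.mpr ⟨one_pos, le_rfl⟩) ht
  simpa using this

/-- the core function `H t = 2(t+2)(t log t - t + 1) - 3(t-1)²` is nonnegative on `(0,∞)`. -/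
lemma H_deriv (t : ℝ) (ht : 0 < t) :
    HasDerivAt (fun t : ℝ => 2 * (t + 2) * (t * Real.log t - t + 1) - 3 * (t - 1) ^ 2)
      (4 * ((t + 1) * Real.log t - 2 * (t - 1))) t := by
  have h1 : HasDerivAt (fun t : ℝ => t * Real.log t - t + 1)
      (Real.log t) t := by
    have := ((hasDerivAt_id t).mul (Real.hasDerivAt_log ht.ne'))
    have h := (this.sub (hasDerivAt_id t)).add_const 1
    convert h using 1
    · rfl
    · rfl
    · rfl
    · simp [ht.ne']
  have h2 : HasDerivAt (fun t : ℝ => 2 * (t + 2)) 2 t := by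
    simpa using ((hasDerivAt_id t).add_const 2).const_mul 2
  have h3 := h2.mul h1
  have h4 : HasDerivAt (fun t : ℝ => 3 * (t - 1) ^ 2) (3 * (2 * (t - 1))) t := by
    simpa using (((hasDerivAt_id t).sub_const 1).pow 2).const_mul 3
  have h5 := h3.sub h4
  convert h5 using 1
  · rfl
  · rfl
  · rfl
  · ring

lemma H_nonneg {t : ℝ} (ht : 0 < t) :
    0 ≤ 2 * (t + 2) * (t * Real.log t - t + 1) - 3 * (t - 1) ^ 2 := by
  rcases le_or_gt 1 t with h1 | h1
  · have hmono : MonotoneOn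
        (fun t : ℝ => 2 * (t + 2) * (t * Real.log t - t + 1) - 3 * (t - 1) ^ 2)
        (Set.Ici 1) := by
      apply monotoneOn_of_deriv_nonneg (convex_Ici 1)
      · intro x hx
        exact ((H_deriv x (lt_of_lt_of_le one_pos hx)).continuousAt).continuousWithinAt
      · intro x hx
        rw [interior_Ici] at hx
        exact (H_deriv x (lt_trans one_pos hx)).differentiableAt.differentiableWithinAt
      · intro x hx
        rw [interior_Ici] at hx
        rw [(H_deriv x (lt_trans one_pos hx)).deriv]
        have := G_nonneg (le_of_lt hx)
        linarith
    have := hmono (Set.mem_Ici.mpr le_rfl) (Set.mem_Ici.mpr h1) h1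
    simpa using this
  · have hanti : AntitoneOn
        (fun t : ℝ => 2 * (t + 2) * (t * Real.log t - t + 1) - 3 * (t - 1) ^ 2)
        (Set.Ioc 0 1) := by
      apply antitoneOn_of_deriv_nonpos (convex_Ioc 0 1)
      · intro x hx
        exact ((H_deriv x hx.1).continuousAt).continuousWithinAt
      · intro x hx
        rw [interior_Ioc] at hx
        exact (H_deriv x hx.1).differentiableAt.differentiableWithinAt
      · intro x hx
        rw [interior_Ioc] at hx
        rw [(H_deriv x hx.1).deriv]
        have := G_nonpos hx.1 (le_of_lt hx.2)
        linarith
    have := hanti (Set.mem_Ioc.mpr ⟨ht, le_of_lt h1⟩) (Set.mem_Ioc.mpr ⟨one_pos, le_rfl⟩)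
      (le_of_lt h1)
    simpa using this

/-- Pointwise Pinsker-type inequality. -/
lemma key_pointwise (p q : ℝ) (hp : 0 ≤ p) (hq : 0 ≤ q) (h0 : q = 0 → p = 0) :
    3 * (p - q) ^ 2 ≤ 2 * (p + 2 * q) * (p * Real.log (p / q) - p + q) := by
  rcases eq_or_lt_of_le hq with hq0 | hq0
  · rw [h0 hq0.symm, ← hq0]; norm_num
  rcases eq_or_lt_of_le hp with hp0 | hp0
  · rw [← hp0]
    simp only [zero_div, Real.log_zero]
    nlinarith
  · have ht : 0 < p / q := div_pos hp0 hq0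
    have hH := H_nonneg ht
    have hexp : 2 * (p + 2 * q) * (p * Real.log (p / q) - p + q) - 3 * (p - q) ^ 2
        = q ^ 2 * (2 * (p / q + 2) * ((p / q) * Real.log (p / q) - p / q + 1)
          - 3 * (p / q - 1) ^ 2) := by
      field_simp
    nlinarith [sq_nonneg q, mul_nonneg (sq_nonneg q) hH]

/-- Finite Pinsker: `∑ |p - q| ≤ √(2·KL(p‖q))`-style bound. -/
lemma pinsker_fin {X : Type*} [Fintype X] (p q : X → ℝ) (ε : ℝ)
    (hp0 : ∀ x, 0 ≤ p x) (hq0 : ∀ x, 0 ≤ q x)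
    (hp1 : ∑ x, p x = 1) (hq1 : ∑ x, q x = 1)
    (h0 : ∀ x, q x = 0 → p x = 0)
    (hε : 0 ≤ ε)
    (hKL : ∑ x, p x * Real.log (p x / q x) ≤ ε ^ 2) :
    ∑ x, |p x - q x| ≤ Real.sqrt 2 * ε := by
  set f : X → ℝ := fun x => |p x - q x| / Real.sqrt (p x + 2 * q x) with hf
  set g : X → ℝ := fun x => Real.sqrt (p x + 2 * q x) with hg
  have hs : ∀ x, 0 ≤ p x + 2 * q x := fun x => by nlinarith [hp0 x, hq0 x]
  have hfg : ∀ x, f x * g x = |p x - q x| := by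
    intro x
    rcases eq_or_lt_of_le (hs x) with h | h
    · have hpx : p x = 0 := by nlinarith [hp0 x, hq0 x]
      have hqx : q x = 0 := by nlinarith [hp0 x, hq0 x]
      simp [hf, hg, hpx, hqx]
    · have hsq : Real.sqrt (p x + 2 * q x) ≠ 0 := by positivity
      simp only [hf, hg]
      exact div_mul_cancel₀ _ hsq
  have hsum_fg : ∑ x, f x * g x = ∑ x, |p x - q x| :=
    Finset.sum_congr rfl fun x _ => hfg x
  have hCS2 : (∑ x, f x * g x) ^ 2 ≤ (∑ x, f x ^ 2) * ∑ x, g x ^ 2 :=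
    Finset.sum_mul_sq_le_sq_mul_sq Finset.univ f g
  have hg2 : ∑ x, g x ^ 2 = 3 := by
    have : ∀ x, g x ^ 2 = p x + 2 * q x := fun x => Real.sq_sqrt (hs x)
    rw [Finset.sum_congr rfl fun x _ => this x, Finset.sum_add_distrib,
      ← Finset.mul_sum, hp1, hq1]
    norm_num
  have hf2 : ∑ x, f x ^ 2 ≤ (2 / 3) * ε ^ 2 := by
    have hpt : ∀ x, 3 * f x ^ 2 ≤ 2 * (p x * Real.log (p x / q x) - p x + q x) := by
      intro x
      rcases eq_or_lt_of_le (hs x) with h | h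
      · have hpx : p x = 0 := by nlinarith [hp0 x, hq0 x]
        have hqx : q x = 0 := by nlinarith [hp0 x, hq0 x]
        simp [hf, hpx, hqx]
      · have hkey := key_pointwise (p x) (q x) (hp0 x) (hq0 x) (h0 x)
        have hfx : f x ^ 2 = (p x - q x) ^ 2 / (p x + 2 * q x) := by
          rw [hf]
          rw [div_pow, sq_abs, Real.sq_sqrt (hs x)]
        rw [hfx, ← mul_div_assoc, div_le_iff₀ h]
        nlinarith [hkey]
    have hsum : ∑ x, (3 * f x ^ 2) ≤ ∑ x, 2 * (p x * Real.log (p x / q x) - p x + q x) :=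
      Finset.sum_le_sum fun x _ => hpt x
    have hrhs : ∑ x, 2 * (p x * Real.log (p x / q x) - p x + q x)
        = 2 * (∑ x, p x * Real.log (p x / q x)) := by
      rw [← Finset.mul_sum]
      congr 1
      simp only [Finset.sum_sub_distrib, Finset.sum_add_distrib, hp1, hq1]
      ring
    rw [hrhs] at hsum
    rw [← Finset.mul_sum] at hsum
    nlinarith [hsum, hKL]
  have habs : (∑ x, |p x - q x|) ^ 2 ≤ 2 * ε ^ 2 := by
    calc (∑ x, |p x - q x|) ^ 2 = (∑ x, f x * g x) ^ 2 := by rw [hsum_fg]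
      _ ≤ (∑ x, f x ^ 2) * ∑ x, g x ^ 2 := hCS2
      _ ≤ (2 / 3) * ε ^ 2 * 3 := by
          rw [hg2]
          have : (0:ℝ) ≤ ∑ x, g x ^ 2 := Finset.sum_nonneg fun x _ => sq_nonneg _
          nlinarith [hf2]
      _ = 2 * ε ^ 2 := by ring
  have hnn : 0 ≤ ∑ x, |p x - q x| := Finset.sum_nonneg fun x _ => abs_nonneg _
  have h2e : (Real.sqrt 2 * ε) ^ 2 = 2 * ε ^ 2 := by
    rw [mul_pow, Real.sq_sqrt (by norm_num : (2:ℝ) ≥ 0)]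
  have hrt : 0 ≤ Real.sqrt 2 * ε := by positivity
  nlinarith [habs, hnn, hrt]


/-- Optimizing the tractable surrogate policies `π̂ θ` yields a near-optimal true
policy `π θ⋆`: its expected reward is within `√2·M·ε` of the surrogate value of any
`θ ∈ Θ`, in particular of `sup_θ E_{π̂_θ}[r]`. -/
theorem surrogate_optimization_guarantee
    {X Θ : Type*} [Fintype X] (π πhat : Θ → X → ℝ) (r : X → ℝ) (M ε : ℝ)
    (hπ0 : ∀ θ x, 0 ≤ π θ x) (hπ1 : ∀ θ, ∑ x, π θ x = 1)
    (hπhat0 : ∀ θ x, 0 ≤ πhat θ x) (hπhat1 : ∀ θ, ∑ x, πhat θ x = 1)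
    (hac : ∀ θ x, π θ x = 0 → πhat θ x = 0)
    (hr : ∀ x, 0 ≤ r x ∧ r x ≤ M)
    (hε : 0 ≤ ε)
    (hKL : ∀ θ, ∑ x, πhat θ x * Real.log (πhat θ x / π θ x) ≤ ε ^ 2)
    (θstar : Θ)
    (hmax : ∀ θ, ∑ x, πhat θ x * r x ≤ ∑ x, πhat θstar x * r x) :
    ∀ θ, ∑ x, π θstar x * r x ≥ ∑ x, πhat θ x * r x - Real.sqrt 2 * M * ε := by
  intro θ
  have hM : 0 ≤ M := by
    rcases isEmpty_or_nonempty X with h | h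
    · exfalso
      have := hπ1 θstar
      simp [Finset.univ_eq_empty] at this
    · obtain ⟨x⟩ := h
      exact le_trans (hr x).1 (hr x).2
  have hS : ∑ x, |πhat θstar x - π θstar x| ≤ Real.sqrt 2 * ε :=
    pinsker_fin (πhat θstar) (π θstar) ε (hπhat0 θstar) (hπ0 θstar)
      (hπhat1 θstar) (hπ1 θstar) (hac θstar) hε (hKL θstar)
  have hdiff : ∑ x, πhat θstar x * r x - ∑ x, π θstar x * r x
      ≤ M * ∑ x, |πhat θstar x - π θstar x| := by
    rw [← Finset.sum_sub_distrib, Finset.mul_sum]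
    apply Finset.sum_le_sum
    intro x _
    have h1 : πhat θstar x * r x - π θstar x * r x = (πhat θstar x - π θstar x) * r x := by
      ring
    rw [h1]
    calc (πhat θstar x - π θstar x) * r x
        ≤ |πhat θstar x - π θstar x| * r x :=
          mul_le_mul_of_nonneg_right (le_abs_self _) (hr x).1
      _ ≤ |πhat θstar x - π θstar x| * M :=
          mul_le_mul_of_nonneg_left (hr x).2 (abs_nonneg _)
      _ = M * |πhat θstar x - π θstar x| := mul_comm _ _
  have hMS : M * ∑ x, |πhat θstar x - π θstar x| ≤ M * (Real.sqrt 2 * ε) :=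
    mul_le_mul_of_nonneg_left hS hM
  have hmax' := hmax θ
  have : Real.sqrt 2 * M * ε = M * (Real.sqrt 2 * ε) := by ring
  linarith [hdiff, hMS, hmax']
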